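/- Let s ≥ 2 be an integer, q = 2^s, m ≥ 3 an odd integer, and n = q^m − 1. Then the minimum distances of the codes C_{(q,m;0)} and C_{(q,m;1)} are equal, and d(C_{(q,m;0)}) = d(C_{(q,m;1)}) ≥ q^{(m−1)/2} + 2q − 1. -/
import Mathlib


open Finset

/-- The `q`-weight of a nonnegative integer: the sum of its base-`q` digits. -/
def qWeight (q i : ℕ) : ℕ := (Nat.digits q i).sum

/-- The set `T_{(q,m;j)} = {i : 1 ≤ i ≤ q^m − 2, wt_q(i) ≡ j (mod 2)}`. -/
def Tset (q m j : ℕ) : Set ℕ :=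
  {i | 1 ≤ i ∧ i ≤ q ^ m - 2 ∧ qWeight q i % 2 = j}

/-- The cyclic code of length `n` over `F` with defining set `T` with respect to `β ∈ E`:
all words `(c_0, …, c_{n-1})` with `∑_j c_j β^{k j} = 0` for every `k ∈ T`. -/
def cyclicCode (F E : Type*) [Field F] [Field E] [Algebra F E]
    (n : ℕ) (β : E) (T : Set ℕ) : Submodule F (Fin n → F) where
  carrier := {c | ∀ k ∈ T, ∑ j : Fin n, algebraMap F E (c j) * β ^ (k * (j : ℕ)) = 0}
  add_mem' := by
    intro a b ha hb k hk
    simp only [Set.mem_setOf_eq, Pi.add_apply, map_add, add_mul] at *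
    rw [Finset.sum_add_distrib, ha k hk, hb k hk, add_zero]
  zero_mem' := by
    intro k hk
    simp
  smul_mem' := by
    intro r c hc k hk
    simp only [Set.mem_setOf_eq, Pi.smul_apply, smul_eq_mul, map_mul, mul_assoc] at *
    rw [← Finset.mul_sum, hc k hk, mul_zero]

/-- The minimum distance of a code: the least Hamming weight of a nonzero codeword. -/
noncomputable def minDist {F : Type*} [Field F] [DecidableEq F] {n : ℕ}
    (C : Submodule F (Fin n → F)) : ℕ :=
  sInf {w | ∃ c ∈ C, c ≠ 0 ∧ hammingNorm c = w}



set_option linter.unusedSectionVars false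
set_option linter.unusedVariables false

lemma qWeight_zero (q : ℕ) : qWeight q 0 = 0 := by simp [qWeight]

lemma qWeight_mul_add (q : ℕ) (hq : 2 ≤ q) (a b : ℕ) (hb : b < q) :
    qWeight q (q * a + b) = qWeight q a + b := by
  rcases Nat.eq_zero_or_pos (q * a + b) with h | h
  · have ha : a = 0 := by
      rcases Nat.eq_zero_or_pos a with h' | h'
      · exact h'
      · nlinarith
    have hb0 : b = 0 := by omega
    simp [ha, hb0, qWeight]
  · unfold qWeight
    rw [Nat.digits_def' (by omega : 1 < q) h]
    have h1 : (q * a + b) % q = b := by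
      rw [Nat.mul_add_mod]; exact Nat.mod_eq_of_lt hb
    have h2 : (q * a + b) / q = a := by
      rw [Nat.mul_add_div (by omega), Nat.div_eq_of_lt hb]; omega
    rw [h1, h2, List.sum_cons]; ring

lemma qWeight_lt (q : ℕ) (hq : 2 ≤ q) (b : ℕ) (hb : b < q) : qWeight q b = b := by
  have := qWeight_mul_add q hq 0 b hb
  simpa [qWeight_zero] using this

lemma qWeight_pow_mul_add (q : ℕ) (hq : 2 ≤ q) (e a b : ℕ) (hb : b < q ^ e) :
    qWeight q (q ^ e * a + b) = qWeight q a + qWeight q b := by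
  induction e generalizing b a with
  | zero =>
    rw [pow_zero] at hb ⊢
    have : b = 0 := by omega
    simp [this, qWeight_zero]
  | succ e ih =>
    have hb0 : b % q < q := Nat.mod_lt _ (by omega)
    have hb1 : b / q < q ^ e := by
      apply Nat.div_lt_of_lt_mul; rw [pow_succ] at hb; nlinarith
    have key : q ^ (e+1) * a + b = q * (q ^ e * a + b / q) + b % q := by
      rw [pow_succ]
      have := Nat.div_add_mod b q
      ring_nf
      omega
    rw [key, qWeight_mul_add q hq _ _ hb0, ih a (b / q) hb1]
    have hb' : qWeight q b = qWeight q (b / q) + b % q := by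
      have := Nat.div_add_mod b q
      calc qWeight q b = qWeight q (q * (b / q) + b % q) := by rw [this]
        _ = qWeight q (b / q) + b % q := qWeight_mul_add q hq _ _ hb0
    omega

/-- complement lemma -/
lemma qWeight_compl (q : ℕ) (hq : 2 ≤ q) (m : ℕ) :
    ∀ k ≤ q ^ m - 1, qWeight q k + qWeight q (q ^ m - 1 - k) = m * (q - 1) := by
  induction m with
  | zero => intro k hk; simp at hk; simp [hk, qWeight_zero]
  | succ m ih =>
    intro k hk
    have hqm : 1 ≤ q ^ m := Nat.one_le_pow _ _ (by omega)
    have hqm1 : 1 ≤ q ^ (m+1) := Nat.one_le_pow _ _ (by omega)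
    have hr : k % q < q := Nat.mod_lt _ (by omega)
    have hkd : k = q * (k / q) + k % q := (Nat.div_add_mod k q).symm
    have hk' : k / q ≤ q ^ m - 1 := by
      have : k / q ≤ (q ^ (m+1) - 1) / q := Nat.div_le_div_right hk
      have h2 : (q ^ (m+1) - 1) / q = q ^ m - 1 := by
        rw [pow_succ]
        rcases Nat.exists_eq_add_of_le hqm with ⟨c, hc⟩
        rw [hc]
        have : (1 + c) * q - 1 = q * c + (q - 1) := by
          have : 1 ≤ q := by omega
          cases q with
          | zero => omega
          | succ q' => ring_nf; omega
        rw [this, Nat.mul_add_div (by omega), Nat.div_eq_of_lt (by omega)]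
        omega
      omega
    have key : q ^ (m+1) - 1 - k = q * (q ^ m - 1 - k / q) + (q - 1 - k % q) := by
      have e1 : q ^ (m+1) = q * q ^ m := by rw [pow_succ]; ring
      have h3 : q * (q ^ m - 1 - k / q) = q * (q^m) - q - q * (k/q) := by
        rw [Nat.mul_sub, Nat.mul_sub]; omega
      have h5 : q ≤ q * q ^ m := Nat.le_mul_of_pos_right q (by omega)
      have h6 : q * (k / q) ≤ q * (q ^ m) - q := by
        have := Nat.mul_le_mul_left q hk'
        rw [Nat.mul_sub] at this; omega
      omega
    have w1 : qWeight q k = qWeight q (k / q) + k % q := by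
      conv_lhs => rw [hkd]
      rw [qWeight_mul_add q hq _ _ hr]
    rw [w1, key, qWeight_mul_add q hq _ _ (by omega)]
    have hih := ih (k / q) hk'
    have hring : (m+1)*(q-1) = m*(q-1) + (q-1) := by ring
    omega

lemma Tset_compl (q m : ℕ) (hq : 2 ≤ q) (hqe : q % 2 = 0) (hmodd : m % 2 = 1)
    (j : ℕ) (hj : j ≤ 1) (k : ℕ) (hk : k ∈ Tset q m (1 - j)) :
    (q ^ m - 1 - k) ∈ Tset q m j := by
  obtain ⟨hk1, hk2, hk3⟩ := hk
  have hqm : 3 ≤ q ^ m := by omega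
  have hsum := qWeight_compl q hq m k (by omega)
  have hodd : (m * (q - 1)) % 2 = 1 :=
    Nat.odd_iff.mp (Nat.odd_mul.mpr ⟨Nat.odd_iff.mpr hmodd, Nat.odd_iff.mpr (by omega)⟩)
  exact ⟨by omega, by omega, by omega⟩

lemma run_mem (q h : ℕ) (hq : 4 ≤ q) (hh : 1 ≤ h) (r : ℕ) (hr : r < q ^ h + 2 * q - 2) :
    (q ^ (2 * h) + (q ^ h - q) * q ^ h + (q ^ h - q + 1)) + r * (q ^ h + 1)
      ∈ Tset q (2 * h + 1) 0 := by
  obtain ⟨T, hT⟩ : ∃ T, q ^ h = T := ⟨_, rfl⟩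
  have hqT : q ≤ T := by
    rw [← hT]
    calc q = q ^ 1 := (pow_one q).symm
    _ ≤ q ^ h := Nat.pow_le_pow_right (by omega) hh
  have hTT : q ^ (2 * h) = T * T := by rw [two_mul, pow_add, hT]
  have hqm : q ^ (2 * h + 1) = T * T * q := by rw [pow_succ, hTT]
  -- abstract weight facts at T
  have hW2 : ∀ a b : ℕ, b < T → qWeight q (T * a + b) = qWeight q a + qWeight q b := by
    intro a b hb
    rw [← hT] at hb ⊢; exact qWeight_pow_mul_add q (by omega) h a b hb
  have hC : ∀ k ≤ T - 1, qWeight q k + qWeight q (T - 1 - k) = h * (q - 1) := by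
    intro k hk
    rw [← hT] at hk ⊢; exact qWeight_compl q (by omega) h k hk
  rw [hTT, hT]
  rw [hT] at hr
  obtain ⟨s, hsT⟩ : ∃ s, T - q = s := ⟨_, rfl⟩
  obtain ⟨p, hp⟩ : ∃ p, q = p + 1 := ⟨q - 1, by omega⟩
  have hsT' : T = s + p + 1 := by omega
  rw [hsT]
  obtain ⟨k, hkdef⟩ : ∃ k, T * T + s * T + (s + 1) + r * (T + 1) = k := ⟨_, rfl⟩
  rw [hkdef]
  -- weight parity and size bound
  have main : qWeight q k % 2 = 0 ∧ k + 2 ≤ T * T * q := by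
    rcases Nat.lt_or_ge r (q - 1) with hc1 | hge1
    · -- phase 1
      have hbT : s + r + 1 < T := by omega
      have hkey : k = T * (T + (s + r)) + (s + r + 1) := by rw [← hkdef]; ring
      have hw1 : qWeight q k = qWeight q (T + (s + r)) + qWeight q (s + r + 1) := by
        rw [hkey]; exact hW2 _ _ (by omega)
      have hw2 : qWeight q (T + (s + r)) = 1 + qWeight q (s + r) := by
        have e : T + (s + r) = T * 1 + (s + r) := by ring
        rw [e, hW2 1 (s + r) (by omega), qWeight_lt q (by omega) 1 (by omega)]
      have hcb := hC (s + r) (by omega)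
      have hcb1 := hC (s + r + 1) (by omega)
      have e1 : T - 1 - (s + r) = q - 1 - r := by omega
      have e2 : T - 1 - (s + r + 1) = q - 2 - r := by omega
      rw [e1, qWeight_lt q (by omega) (q - 1 - r) (by omega)] at hcb
      rw [e2, qWeight_lt q (by omega) (q - 2 - r) (by omega)] at hcb1
      have hT2 : 4 * T ≤ T * T := Nat.mul_le_mul_right T (by omega)
      have hq4 : T * T * 4 ≤ T * T * q := Nat.mul_le_mul_left (T * T) hq
      constructor
      · omega
      · have h1 : T * (T + (s + r)) ≤ T * (T + T) := Nat.mul_le_mul_left T (by omega)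
        have h1' : T * (T + T) = T * T + T * T := by ring
        omega
    rcases Nat.lt_or_ge r (q - 1 + T) with hc2 | hge2
    · -- phase 2
      obtain ⟨w, hw⟩ : ∃ w, r = p + w := ⟨r - p, by omega⟩
      have hwT : w < T := by omega
      have hkey : k = T * (2 * T + w) + w := by
        rw [← hkdef, hw, hsT']; ring
      have hw1 : qWeight q k = qWeight q (2 * T + w) + qWeight q w := by
        rw [hkey]; exact hW2 _ _ hwT
      have hw2 : qWeight q (2 * T + w) = 2 + qWeight q w := by
        have e : 2 * T + w = T * 2 + w := by ring
        rw [e, hW2 2 w hwT, qWeight_lt q (by omega) 2 (by omega)]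
      have hT2 : 4 * T ≤ T * T := Nat.mul_le_mul_right T (by omega)
      have hq4 : T * T * 4 ≤ T * T * q := Nat.mul_le_mul_left (T * T) hq
      constructor
      · omega
      · have h1 : T * (2 * T + w) ≤ T * (3 * T) := Nat.mul_le_mul_left T (by omega)
        have h1' : T * (3 * T) = T * T + T * T + T * T := by ring
        omega
    · -- phase 3
      obtain ⟨i, hi⟩ : ∃ i, r = p + T + i := ⟨r - p - T, by omega⟩
      have hiq : i + 1 < q := by omega
      have hkey : k = T * (3 * T + (i + 1)) + i := by
        rw [← hkdef, hi, hsT']; ring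
      have hw1 : qWeight q k = qWeight q (3 * T + (i + 1)) + qWeight q i := by
        rw [hkey]; exact hW2 _ _ (by omega)
      have hw2 : qWeight q (3 * T + (i + 1)) = 3 + (i + 1) := by
        have e : 3 * T + (i + 1) = T * 3 + (i + 1) := by ring
        rw [e, hW2 3 (i + 1) (by omega), qWeight_lt q (by omega) 3 (by omega),
          qWeight_lt q (by omega) (i + 1) (by omega)]
      rw [qWeight_lt q (by omega) i (by omega)] at hw1
      have hT2 : 4 * T ≤ T * T := Nat.mul_le_mul_right T (by omega)
      have hq4 : T * T * 4 ≤ T * T * q := Nat.mul_le_mul_left (T * T) hq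
      constructor
      · omega
      · have h1 : T * (3 * T + (i + 1)) ≤ T * (3 * T + p) := Nat.mul_le_mul_left T (by omega)
        have h1' : T * (3 * T + p) = T * T + T * T + T * T + p * T := by ring
        have h2a : q * T ≤ T * T := Nat.mul_le_mul_right T hqT
        have h2b : q * T = p * T + T := by rw [hp]; ring
        omega
  exact ⟨by omega, by omega, main.1⟩

lemma gcd_run (q hh : ℕ) (hq : 2 ≤ q) (hqe : q % 2 = 0) :
    Nat.gcd (q ^ hh + 1) (q ^ (2 * hh + 1) - 1) = 1 := by
  set u := q ^ hh + 1 with hu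
  set n := q ^ (2 * hh + 1) - 1 with hn
  have hqm : 2 ≤ q ^ (2 * hh + 1) := by
    calc (2:ℕ) ≤ q := hq
    _ = q ^ 1 := (pow_one q).symm
    _ ≤ q ^ (2 * hh + 1) := Nat.pow_le_pow_right (by omega) (by omega)
  have h2d : 2 ∣ q ^ (2 * hh + 1) := dvd_pow (Nat.dvd_of_mod_eq_zero hqe) (by omega)
  have hnodd : ¬ (2 ∣ n) := by omega
  set d := Nat.gcd u n with hd
  have hdn : d ∣ n := Nat.gcd_dvd_right _ _
  have hdu : d ∣ u := Nat.gcd_dvd_left _ _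
  have hd0 : d ≠ 0 := by
    intro h0
    rw [h0] at hdn
    rw [zero_dvd_iff] at hdn
    omega
  have hdodd : ¬ (2 ∣ d) := fun h2 => hnodd (h2.trans hdn)
  haveI : NeZero d := ⟨hd0⟩
  have hu0 : ((q : ZMod d) ^ hh + 1) = 0 := by
    have := (ZMod.natCast_eq_zero_iff u d).mpr hdu
    rw [hu] at this
    push_cast at this
    exact this
  have hn0 : ((q : ZMod d) ^ (2 * hh + 1)) = 1 := by
    have h1 := (ZMod.natCast_eq_zero_iff n d).mpr hdn
    rw [hn, Nat.cast_sub (by omega)] at h1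
    push_cast at h1
    linear_combination h1
  have hq1 : (q : ZMod d) = 1 := by
    have h2 : ((q : ZMod d) ^ hh) = -1 := by linear_combination hu0
    have h3 : ((q : ZMod d) ^ (2 * hh)) = 1 := by
      rw [two_mul, pow_add, h2]; ring
    calc (q : ZMod d) = (q : ZMod d) ^ (2 * hh) * q := by rw [h3]; ring
    _ = (q : ZMod d) ^ (2 * hh + 1) := by rw [pow_succ]
    _ = 1 := hn0
  have h2 : ((2 : ℕ) : ZMod d) = 0 := by
    have e : ((q : ZMod d) ^ hh + 1) = 2 := by rw [hq1, one_pow]; norm_num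
    push_cast
    rw [← e]; exact hu0
  have hd2 : d ∣ 2 := (ZMod.natCast_eq_zero_iff 2 d).mp h2
  have := Nat.le_of_dvd (by omega) hd2
  omega

lemma vandermonde_zero {E : Type*} [Field E] [DecidableEq E] {n L : ℕ} (γ : E)
    (hinj : ∀ a b : ℕ, a < n → b < n → γ ^ a = γ ^ b → a = b)
    (x : Fin n → E)
    (hsupp : ({j | x j ≠ 0} : Finset (Fin n)).card ≤ L)
    (hz : ∀ r : ℕ, r < L → ∑ j : Fin n, x j * γ ^ (r * (j : ℕ)) = 0) :
    ∀ j, x j = 0 := by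
  classical
  set S : Finset (Fin n) := {j | x j ≠ 0} with hS
  set w := S.card with hw
  set e : Fin w ≃ {a // a ∈ S} := S.equivFin.symm with he
  set v : Fin w → E := fun i => γ ^ (((e i : Fin n)) : ℕ) with hv
  have hvinj : Function.Injective v := by
    intro i i' hii
    have h1 : ((e i : Fin n) : ℕ) = ((e i' : Fin n) : ℕ) :=
      hinj _ _ (Fin.is_lt _) (Fin.is_lt _) hii
    exact e.injective (Subtype.ext (Fin.val_injective h1))
  set M : Matrix (Fin w) (Fin w) E := (Matrix.vandermonde v).transpose with hM
  have hdet : M.det ≠ 0 := by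
    rw [hM, Matrix.det_transpose]
    exact Matrix.det_vandermonde_ne_zero_iff.mpr hvinj
  have hmv : M.mulVec (fun i => x (e i)) = 0 := by
    funext r
    have hr : (r : ℕ) < L := lt_of_lt_of_le (Fin.is_lt r) (hw ▸ hsupp)
    have hfull := hz r hr
    have h1 : ∑ j : Fin n, x j * γ ^ ((r : ℕ) * (j : ℕ))
        = ∑ j ∈ S, x j * γ ^ ((r : ℕ) * (j : ℕ)) := by
      symm
      apply Finset.sum_subset (Finset.subset_univ S)
      intro j _ hj
      have : x j = 0 := by
        by_contra hxj
        exact hj (by simp [hS, hxj])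
      simp [this]
    have h2 : ∑ j ∈ S, x j * γ ^ ((r : ℕ) * (j : ℕ))
        = ∑ i : Fin w, x (e i) * γ ^ ((r : ℕ) * ((e i : Fin n) : ℕ)) := by
      rw [← Finset.sum_coe_sort S]
      exact (Equiv.sum_comp e (fun a : {a // a ∈ S} =>
        x a * γ ^ ((r : ℕ) * ((a : Fin n) : ℕ)))).symm
    have h3 : (M.mulVec (fun i => x (e i))) r
        = ∑ i : Fin w, x (e i) * γ ^ ((r : ℕ) * ((e i : Fin n) : ℕ)) := by
      rw [Matrix.mulVec, dotProduct]
      apply Finset.sum_congr rfl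
      intro i _
      rw [hM, Matrix.transpose_apply, Matrix.vandermonde]
      simp only [Matrix.of_apply]
      rw [hv]
      rw [← pow_mul, mul_comm ((e i : Fin n) : ℕ) (r : ℕ)]
      ring
    rw [h3, ← h2, ← h1, hfull]
    rfl
  have hx0 := Matrix.eq_zero_of_mulVec_eq_zero hdet hmv
  intro j
  by_contra hxj
  have hjS : j ∈ S := by simp [hS, hxj]
  have := congrFun hx0 (e.symm ⟨j, hjS⟩)
  simp only [Equiv.apply_symm_apply, Pi.zero_apply] at this
  exact hxj this

section Rev
variable {n : ℕ} [NeZero n] {F E : Type*} [Field F] [Field E] [Algebra F E]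

lemma exp_neg (β : E) (hβ : orderOf β = n) (k : ℕ) (hk : k ≤ n) (i : Fin n) :
    β ^ ((n - k) * (((-i : Fin n)) : ℕ)) = β ^ (k * (i : ℕ)) := by
  rw [Fin.coe_neg]
  have hmodeq : (n - k) * ((n - (i : ℕ)) % n) ≡ k * (i : ℕ) [MOD n] := by
    have hi : (i : ℕ) ≤ n := le_of_lt (Fin.is_lt i)
    calc (n - k) * ((n - (i : ℕ)) % n) ≡ (n - k) * (n - (i : ℕ)) [MOD n] :=
          Nat.ModEq.mul_left _ (Nat.mod_modEq _ _)
      _ ≡ k * (i : ℕ) [MOD n] := by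
          have key : (n - k) * (n - (i : ℕ)) + (n * (i : ℕ) + k * n) = k * (i : ℕ) + n * n := by
            zify [hk, hi]; ring
          have h2 : n * (i : ℕ) + k * n ≡ 0 [MOD n] :=
            Nat.modEq_zero_iff_dvd.mpr ⟨(i : ℕ) + k, by ring⟩
          have h3 : n * n ≡ 0 [MOD n] := Nat.modEq_zero_iff_dvd.mpr ⟨n, rfl⟩
          calc (n - k) * (n - (i : ℕ))
              ≡ (n - k) * (n - (i : ℕ)) + (n * (i : ℕ) + k * n) [MOD n] := by
                nth_rewrite 1 [← add_zero ((n - k) * (n - (i : ℕ)))]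
                exact (Nat.ModEq.refl _).add h2.symm
          _ = k * (i : ℕ) + n * n := key
          _ ≡ k * (i : ℕ) + 0 [MOD n] := (Nat.ModEq.refl _).add h3
          _ = k * (i : ℕ) := by ring
  have h1 : β ^ ((n - k) * ((n - (i : ℕ)) % n) % orderOf β)
      = β ^ ((n - k) * ((n - (i : ℕ)) % n)) := pow_mod_orderOf β _
  have h2 : β ^ (k * (i : ℕ) % orderOf β) = β ^ (k * (i : ℕ)) := pow_mod_orderOf β _
  rw [← h1, ← h2, hβ]
  unfold Nat.ModEq at hmodeq
  rw [hmodeq]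

lemma rev_mem_code (q m : ℕ) (hq : 2 ≤ q) (hqe : q % 2 = 0) (hmodd : m % 2 = 1)
    (hn : n = q ^ m - 1) (β : E) (hβ : orderOf β = n)
    (j : ℕ) (hj : j ≤ 1) (c : Fin n → F)
    (hc : c ∈ cyclicCode F E n β (Tset q m (1 - j))) :
    (fun i : Fin n => c (-i)) ∈ cyclicCode F E n β (Tset q m j) := by
  intro k hk
  have hkn : 1 ≤ k ∧ k ≤ n - 1 := by
    obtain ⟨h1, h2, _⟩ := hk
    exact ⟨h1, by omega⟩
  have hk' : (n - k) ∈ Tset q m (1 - j) := by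
    have h1j : 1 - (1 - j) = j := by omega
    have := Tset_compl q m hq hqe hmodd (1 - j) (by omega) k (by rw [h1j]; exact hk)
    rw [← hn] at this
    exact this
  have h0 := hc (n - k) hk'
  have hre : ∑ i : Fin n, algebraMap F E (c (-i)) * β ^ (k * (i : ℕ))
      = ∑ i : Fin n, algebraMap F E (c i) * β ^ ((n - k) * (i : ℕ)) := by
    apply Fintype.sum_equiv (Equiv.neg (Fin n))
    intro i
    simp only [Equiv.neg_apply]
    rw [exp_neg β hβ k (by omega) i]
  rw [hre]
  exact h0

lemma rev_hammingNorm [DecidableEq F] (c : Fin n → F) :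
    hammingNorm (fun i : Fin n => c (-i)) = hammingNorm c := by
  unfold hammingNorm
  refine Finset.card_bij' (fun i _ => -i) (fun i _ => -i) ?_ ?_ ?_ ?_
  · intro a ha
    simp only [Finset.mem_filter, Finset.mem_univ, true_and] at ha ⊢
    exact ha
  · intro a ha
    simp only [Finset.mem_filter, Finset.mem_univ, true_and] at ha ⊢
    rw [neg_neg]
    exact ha
  · intro a _; exact neg_neg a
  · intro a _; exact neg_neg a

lemma rev_ne_zero (c : Fin n → F) (hc : c ≠ 0) : (fun i : Fin n => c (-i)) ≠ 0 := by
  intro h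
  apply hc
  funext i
  have := congrFun h (-i)
  simp only [neg_neg, Pi.zero_apply] at this
  exact this

end Rev

section Ones
variable {F E : Type*} [Field F] [Field E] [Algebra F E]

lemma ones_mem {n : ℕ} (β : E) (hβ : orderOf β = n) (T : Set ℕ)
    (hT : ∀ k ∈ T, 1 ≤ k ∧ k ≤ n - 1) :
    (fun _ : Fin n => (1 : F)) ∈ cyclicCode F E n β T := by
  intro k hk
  obtain ⟨hk1, hk2⟩ := hT k hk
  have hn0 : 0 < n := by omega
  have hβn : β ^ n = 1 := by rw [← hβ]; exact pow_orderOf_eq_one β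
  have hb : β ^ k ≠ 1 := by
    intro h
    have hdvd := orderOf_dvd_of_pow_eq_one h
    rw [hβ] at hdvd
    have := Nat.le_of_dvd (by omega) hdvd
    omega
  have h1 : ∀ j : Fin n, algebraMap F E (1 : F) * β ^ (k * (j : ℕ)) = (β ^ k) ^ (j : ℕ) := by
    intro j
    rw [map_one, one_mul, pow_mul]
  rw [Finset.sum_congr rfl (fun j _ => h1 j)]
  rw [Fin.sum_univ_eq_sum_range (fun j => (β ^ k) ^ j) n]
  rw [geom_sum_eq hb n]
  rw [← pow_mul, mul_comm k n, pow_mul, hβn, one_pow]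
  simp


end Ones

theorem stmt10 (s q m n : ℕ) (hs : 2 ≤ s) (hq : q = 2 ^ s)
    (hm : 3 ≤ m) (hmodd : Odd m) (hn : n = q ^ m - 1)
    (F E : Type*) [Field F] [Fintype F] [DecidableEq F] [Field E] [Fintype E] [Algebra F E]
    (hF : Fintype.card F = q) (hE : Fintype.card E = q ^ m)
    (β : E) (hβ : orderOf β = n) :
    minDist (cyclicCode F E n β (Tset q m 0)) = minDist (cyclicCode F E n β (Tset q m 1)) ∧
      q ^ ((m - 1) / 2) + 2 * q - 1 ≤ minDist (cyclicCode F E n β (Tset q m 0)) := by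
  classical
  obtain ⟨h, hmh⟩ := hmodd
  have hq4 : 4 ≤ q := by
    rw [hq]
    calc (4:ℕ) = 2 ^ 2 := rfl
    _ ≤ 2 ^ s := Nat.pow_le_pow_right (by omega) hs
  have hqe : q % 2 = 0 := by
    rw [hq]
    have : (2:ℕ) ∣ 2 ^ s := dvd_pow_self 2 (by omega)
    omega
  have hh1 : 1 ≤ h := by omega
  have hm2 : m % 2 = 1 := by omega
  have hqm4 : 4 ≤ q ^ m := by
    calc (4:ℕ) ≤ q := hq4
    _ = q ^ 1 := (pow_one q).symm
    _ ≤ q ^ m := Nat.pow_le_pow_right (by omega) (by omega)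
  have hn0 : 0 < n := by omega
  haveI : NeZero n := ⟨by omega⟩
  have hβn : β ^ n = 1 := by rw [← hβ]; exact pow_orderOf_eq_one β
  have hβ0 : β ≠ 0 := by
    intro h0
    rw [h0, zero_pow (by omega : n ≠ 0)] at hβn
    exact zero_ne_one hβn
  -- the two defining sets and codes
  set C0 := cyclicCode F E n β (Tset q m 0) with hC0
  set C1 := cyclicCode F E n β (Tset q m 1) with hC1
  set S0 := {w | ∃ c ∈ C0, c ≠ 0 ∧ hammingNorm c = w} with hS0
  set S1 := {w | ∃ c ∈ C1, c ≠ 0 ∧ hammingNorm c = w} with hS1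
  have hmd0 : minDist C0 = sInf S0 := rfl
  have hmd1 : minDist C1 = sInf S1 := rfl
  -- Part 1 : S0 = S1
  have hSeq : S0 = S1 := by
    ext w
    constructor
    · rintro ⟨c, hc, hcne, hcw⟩
      refine ⟨fun i => c (-i), ?_, rev_ne_zero c hcne, by rw [rev_hammingNorm]; exact hcw⟩
      exact rev_mem_code q m (by omega) hqe hm2 hn β hβ 1 (le_refl 1) c hc
    · rintro ⟨c, hc, hcne, hcw⟩
      refine ⟨fun i => c (-i), ?_, rev_ne_zero c hcne, by rw [rev_hammingNorm]; exact hcw⟩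
      exact rev_mem_code q m (by omega) hqe hm2 hn β hβ 0 (by omega) c hc
  -- key : low-weight codewords of C0 vanish
  have hL : ∀ c : Fin n → F, c ∈ C0 → hammingNorm c ≤ q ^ h + 2 * q - 2 → c = 0 := by
    intro c hc hwt
    set u := q ^ h + 1 with hu
    set A := q ^ (2 * h) + (q ^ h - q) * q ^ h + (q ^ h - q + 1) with hA
    have hgcd : Nat.gcd n u = 1 := by
      rw [Nat.gcd_comm, hu, hn, hmh]
      exact gcd_run q h (by omega) hqe
    have hinj : ∀ a b : ℕ, a < n → b < n → (β ^ u) ^ a = (β ^ u) ^ b → a = b := by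
      intro a b ha hb hab
      have hfin : IsOfFinOrder β := orderOf_pos_iff.mp (by omega)
      have hunit : IsUnit β := hfin.isUnit
      obtain ⟨w, hw⟩ := hunit
      have hord : orderOf w = n := by rw [← hβ, ← hw, orderOf_units]
      have hww : (w : E) ^ (u * a) = (w : E) ^ (u * b) := by
        rw [hw, pow_mul, pow_mul]; exact hab
      have hw2 : w ^ (u * a) = w ^ (u * b) := Units.ext (by
        rw [Units.val_pow_eq_pow_val, Units.val_pow_eq_pow_val]
        exact hww)
      have hmod : u * a ≡ u * b [MOD orderOf w] := pow_eq_pow_iff_modEq.mp hw2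
      rw [hord] at hmod
      have := Nat.ModEq.cancel_left_of_coprime hgcd hmod
      have h1 : a % n = b % n := this
      rw [Nat.mod_eq_of_lt ha, Nat.mod_eq_of_lt hb] at h1
      exact h1
    set x : Fin n → E := fun j => algebraMap F E (c j) * β ^ (A * (j : ℕ)) with hx
    have hxc : ∀ j, x j ≠ 0 ↔ c j ≠ 0 := by
      intro j
      rw [hx]
      simp only [ne_eq, mul_eq_zero, not_or]
      constructor
      · intro hj hcj
        exact hj.1 (by rw [hcj, map_zero])
      · intro hcj
        refine ⟨fun h' => hcj ?_, pow_ne_zero _ hβ0⟩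
        have := (algebraMap F E).injective
        have h0 : algebraMap F E (c j) = algebraMap F E 0 := by rw [map_zero]; exact h'
        exact this h0
    have hsupp : ({j | x j ≠ 0} : Finset (Fin n)).card ≤ q ^ h + 2 * q - 2 := by
      have hset : ({j | x j ≠ 0} : Finset (Fin n)) = ({j | c j ≠ 0} : Finset (Fin n)) := by
        ext j
        simp only [Finset.mem_filter, Finset.mem_univ, true_and]
        exact hxc j
      rw [hset]
      exact hwt
    have hz : ∀ r : ℕ, r < q ^ h + 2 * q - 2 →
        ∑ j : Fin n, x j * (β ^ u) ^ (r * (j : ℕ)) = 0 := by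
      intro r hr
      have hmem : (A + r * u) ∈ Tset q m 0 := by
        rw [hmh]
        exact run_mem q h hq4 hh1 r hr
      have := hc (A + r * u) hmem
      rw [← this]
      apply Finset.sum_congr rfl
      intro j _
      rw [hx]
      rw [mul_assoc, ← pow_mul, ← pow_add]
      congr 2
      ring
    have hxz := vandermonde_zero (β ^ u) hinj x hsupp hz
    funext j
    have := hxz j
    by_contra hcj
    exact ((hxc j).mpr hcj) this
  -- nonemptiness via all-ones word
  have hones : (fun _ : Fin n => (1 : F)) ∈ C0 := by
    apply ones_mem β hβ
    intro k hk
    obtain ⟨h1, h2, _⟩ := hk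
    omega
  have hne : S0.Nonempty := by
    refine ⟨hammingNorm (fun _ : Fin n => (1 : F)), ⟨_, hones, ?_, rfl⟩⟩
    intro h0
    have := congrFun h0 ⟨0, hn0⟩
    simp only [Pi.zero_apply] at this
    exact one_ne_zero this
  have hmem := Nat.sInf_mem hne
  obtain ⟨c, hc, hcne, hcw⟩ := hmem
  have hbound : q ^ h + 2 * q - 1 ≤ sInf S0 := by
    by_contra hlt
    push_neg at hlt
    have : hammingNorm c ≤ q ^ h + 2 * q - 2 := by omega
    exact hcne (hL c hc this)
  constructor
  · rw [hmd0, hmd1, hSeq]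
  · have hdiv : (m - 1) / 2 = h := by omega
    rw [hdiv, hmd0]
    exact hbound
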